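/- Let k ≥ 2 and let H = K̄_[k]∘H2 be a graph in C_k. Then for every i ∈ [k] and every x ∈ [3]^k, the distance in H between the vertex i and the vertex x equals x_(i). -/

import Mathlib

open SimpleGraph

/-- `w` enumerates a `(k, m)`-completeness-resolving set of `G`:
`w` is injective, its range `W` is a proper subset of the vertex set, and the map
`u ↦ (dist (w 1) u, …, dist (w k) u)` is a bijection from `V ∖ W` onto `[m]^k`. -/
def IsCRS {V : Type*} (G : SimpleGraph V) {k : ℕ} (w : Fin k → V) (m : ℕ) : Prop :=
  Function.Injective w ∧ Set.range w ≠ Set.univ ∧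
    Function.Injective
      (fun u : {u : V // u ∉ Set.range w} => fun i : Fin k => G.dist (w i) u.1) ∧
    Set.range (fun u : {u : V // u ∉ Set.range w} => fun i : Fin k => G.dist (w i) u.1) =
      {x : Fin k → ℕ | ∀ i, 1 ≤ x i ∧ x i ≤ m}

/-- `G` is a `(k, m)`-completeness-resolvable graph. -/
def IsCRG {V : Type*} (G : SimpleGraph V) (k m : ℕ) : Prop :=
  ∃ w : Fin k → V, IsCRS G w m

/-- `G` is completeness-resolvable. -/
def CompletenessResolvable {V : Type*} (G : SimpleGraph V) : Prop :=
  ∃ (k m : ℕ) (w : Fin k → V), IsCRS G w m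

/-! ### The family `B_k`.
Tuples in `[2]^k` are modelled as functions `Fin k → Fin 2`, the `Fin 2`-value `j`
corresponding to the entry `j + 1 ∈ {1, 2}`. -/

/-- The graph `H1 ∘ H2` on `[k] ⊔ [2]^k`. -/
def comp2 {k : ℕ} (H1 : SimpleGraph (Fin k)) (H2 : SimpleGraph (Fin k → Fin 2)) :
    SimpleGraph (Fin k ⊕ (Fin k → Fin 2)) where
  Adj a b :=
    match a, b with
    | Sum.inl i, Sum.inl j => H1.Adj i j
    | Sum.inr x, Sum.inr y => H2.Adj x y
    | Sum.inl i, Sum.inr x => x i = 0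
    | Sum.inr x, Sum.inl i => x i = 0
  symm := ⟨by
    rintro (i | x) (j | y) h
    · exact SimpleGraph.Adj.symm (G := H1) h
    · exact h
    · exact h
    · exact SimpleGraph.Adj.symm (G := H2) h⟩
  loopless := ⟨by
    rintro (i | x) h
    · exact SimpleGraph.Adj.ne (G := H1) h rfl
    · exact SimpleGraph.Adj.ne (G := H2) h rfl⟩

/-- The defining condition of `B_k`: for each `i`, the edges of `H2` lying in the complete
bipartite graph `B_i^k` (i.e. joining a tuple with `i`-th entry `1` to one with `i`-th entry `2`)
cover every tuple all of whose entries on the closed neighbourhood of `i` in `H1` equal `2`. -/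
def BCond {k : ℕ} (H1 : SimpleGraph (Fin k)) (H2 : SimpleGraph (Fin k → Fin 2)) : Prop :=
  ∀ (i : Fin k) (x : Fin k → Fin 2),
    (∀ j : Fin k, (j = i ∨ H1.Adj i j) → x j = 1) →
    ∃ y : Fin k → Fin 2, H2.Adj x y ∧ y i ≠ x i

/-- The family `B_k`, as a set of graphs on `[k] ⊔ [2]^k`. -/
def Bset (k : ℕ) : Set (SimpleGraph (Fin k ⊕ (Fin k → Fin 2))) :=
  {G | ∃ H1 H2, BCond H1 H2 ∧ G = comp2 H1 H2}

/-- `H2` is `H1`-minimal. -/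
def H1Minimal {k : ℕ} (H1 : SimpleGraph (Fin k)) (H2 : SimpleGraph (Fin k → Fin 2)) : Prop :=
  comp2 H1 H2 ∈ Bset k ∧
    ∀ H2' : SimpleGraph (Fin k → Fin 2), H2' < H2 → comp2 H1 H2' ∉ Bset k

/-- The graph `U_k` on `[2]^k`, with unique edge `{(1,…,1), (2,…,2)}`. -/
def Uk (k : ℕ) : SimpleGraph (Fin k → Fin 2) :=
  SimpleGraph.fromEdgeSet {s(fun _ => (0 : Fin 2), fun _ => (1 : Fin 2))}

/-- The graph `V_k` on `[2]^k`, whose edges join `(2,…,2)` to the tuples having exactly one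
entry equal to `1`. -/
def Vk (k : ℕ) : SimpleGraph (Fin k → Fin 2) :=
  SimpleGraph.fromEdgeSet
    {e | ∃ i : Fin k, e = s(Function.update (fun _ => (1 : Fin 2)) i 0, fun _ => (1 : Fin 2))}

/-- The graph `R_k` on `[2]^k`: the perfect matching pairing each tuple with its complement. -/
def Rk (k : ℕ) : SimpleGraph (Fin k → Fin 2) :=
  SimpleGraph.fromRel fun x y => ∀ i, x i ≠ y i

/-- The hypercube graph `Q_k` on `[2]^k`: tuples are adjacent when they differ in exactly one
coordinate. -/
def Qk (k : ℕ) : SimpleGraph (Fin k → Fin 2) :=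
  SimpleGraph.fromRel fun x y => ∃ i, x i ≠ y i ∧ ∀ j, j ≠ i → x j = y j

/-! ### The family `C_k`.
Tuples in `[3]^k` are modelled as functions `Fin k → Fin 3`, the `Fin 3`-value `j`
corresponding to the entry `j + 1 ∈ {1, 2, 3}`. -/

/-- Entries `a` and `b` (of `{1,2,3}`, coded in `Fin 3`) satisfy `|a - b| ≤ 1`. -/
def near3 (a b : Fin 3) : Prop := (a : ℕ) ≤ (b : ℕ) + 1 ∧ (b : ℕ) ≤ (a : ℕ) + 1

/-- `{x, y}` is an edge of the bipartite graph `C_i^k` (between `i`-th entry `1` and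
`i`-th entry `2`, with all other entries differing by at most `1`). -/
def CAdj {k : ℕ} (i : Fin k) (x y : Fin k → Fin 3) : Prop :=
  ((x i = 0 ∧ y i = 1) ∨ (x i = 1 ∧ y i = 0)) ∧ ∀ t, t ≠ i → near3 (x t) (y t)

/-- `{x, y}` is an edge of the bipartite graph `D_i^k` (between `i`-th entry `2` and
`i`-th entry `3`, with all other entries differing by at most `1`). -/
def DAdj {k : ℕ} (i : Fin k) (x y : Fin k → Fin 3) : Prop :=
  ((x i = 1 ∧ y i = 2) ∨ (x i = 2 ∧ y i = 1)) ∧ ∀ t, t ≠ i → near3 (x t) (y t)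

/-- The graph `K̄_[k] ∘ H2` on `[k] ⊔ [3]^k`. -/
def comp3 {k : ℕ} (H2 : SimpleGraph (Fin k → Fin 3)) :
    SimpleGraph (Fin k ⊕ (Fin k → Fin 3)) where
  Adj a b :=
    match a, b with
    | Sum.inl _, Sum.inl _ => False
    | Sum.inr x, Sum.inr y => H2.Adj x y
    | Sum.inl i, Sum.inr x => x i = 0
    | Sum.inr x, Sum.inl i => x i = 0
  symm := ⟨by
    rintro (i | x) (j | y) h
    · exact h
    · exact h
    · exact h
    · exact SimpleGraph.Adj.symm (G := H2) h⟩
  loopless := ⟨by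
    rintro (i | x) h
    · exact h
    · exact SimpleGraph.Adj.ne (G := H2) h rfl⟩

/-- The defining condition of `C_k`: every edge of `H2` lies in some `C_i^k` or `D_i^k`;
for each `i` the edges of `H2` in `C_i^k` cover `[3]^k_i(2)`, and the edges of `H2` in
`D_i^k` cover `S_i^k`. -/
def CCond {k : ℕ} (H2 : SimpleGraph (Fin k → Fin 3)) : Prop :=
  (∀ x y, H2.Adj x y → ∃ i, CAdj i x y ∨ DAdj i x y) ∧
  (∀ (i : Fin k) (x : Fin k → Fin 3), x i = 1 → ∃ y, H2.Adj x y ∧ CAdj i x y) ∧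
  (∀ (i : Fin k) (x : Fin k → Fin 3), x i = 2 → (∀ t, x t ≠ 0) →
    ∃ y, H2.Adj x y ∧ DAdj i x y)

/-- The family `C_k`, as a set of graphs on `[k] ⊔ [3]^k`. -/
def Cset (k : ℕ) : Set (SimpleGraph (Fin k ⊕ (Fin k → Fin 3))) :=
  {G | ∃ H2, CCond H2 ∧ G = comp3 H2}

/-- The graph `Γ_k` on `[3]^k`: distinct tuples are adjacent when all their entries differ
by at most `1`. -/
def GammaK (k : ℕ) : SimpleGraph (Fin k → Fin 3) :=
  SimpleGraph.fromRel fun x y => ∀ i, near3 (x i) (y i)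

/-- `H2` is `k`-minimal. -/
def KMinimalC {k : ℕ} (H2 : SimpleGraph (Fin k → Fin 3)) : Prop :=
  comp3 H2 ∈ Cset k ∧
    ∀ H2' : SimpleGraph (Fin k → Fin 3), H2' < H2 → comp3 H2' ∉ Cset k


lemma step3 {k : ℕ} {H2 : SimpleGraph (Fin k → Fin 3)} (hcc : CCond H2)
    (i : Fin k) {z w : Fin k → Fin 3} (h : H2.Adj z w) :
    (w i : ℕ) ≤ (z i : ℕ) + 1 := by
  obtain ⟨j, hj | hj⟩ := hcc.1 z w h
  · rcases eq_or_ne j i with rfl | hji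
    · rcases hj.1 with ⟨h1, h2⟩ | ⟨h1, h2⟩ <;> rw [h1, h2] <;> decide
    · exact (hj.2 i hji.symm).2
  · rcases eq_or_ne j i with rfl | hji
    · rcases hj.1 with ⟨h1, h2⟩ | ⟨h1, h2⟩ <;> rw [h1, h2] <;> decide
    · exact (hj.2 i hji.symm).2

def fval3 {k : ℕ} (i : Fin k) : (Fin k ⊕ (Fin k → Fin 3)) → ℕ
  | Sum.inl _ => 1
  | Sum.inr z => (z i : ℕ)

lemma walk_bound3 {k : ℕ} {H2 : SimpleGraph (Fin k → Fin 3)} (hcc : CCond H2)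
    (i : Fin k) {a b : Fin k ⊕ (Fin k → Fin 3)} (q : (comp3 H2).Walk a b) :
    fval3 i b ≤ fval3 i a + q.length := by
  induction q with
  | nil => simp
  | @cons a v b h q ih =>
      have hstep : fval3 i v ≤ fval3 i a + 1 := by
        rcases a with j | z <;> rcases v with j' | w
        · exact h.elim
        · have := (w i).isLt
          simp only [fval3]
          omega
        · simp [fval3]
        · exact step3 hcc i h
      simp only [SimpleGraph.Walk.length_cons]
      omega

lemma walk_low3 {k : ℕ} {H2 : SimpleGraph (Fin k → Fin 3)} (hcc : CCond H2)
    (i : Fin k) (x : Fin k → Fin 3)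
    (p : (comp3 H2).Walk (Sum.inl i) (Sum.inr x)) :
    (x i : ℕ) + 1 ≤ p.length := by
  cases p with
  | cons h q =>
      rename_i v
      rcases v with j | z
      · exact h.elim
      · have hz : z i = 0 := h
        have hb := walk_bound3 hcc i q
        simp only [fval3, hz] at hb
        simp only [SimpleGraph.Walk.length_cons]
        omega

/-- **Lemma.** If `H = K̄_[k] ∘ H2 ∈ C_k` (`k ≥ 2`), then for every `i ∈ [k]` and
`x ∈ [3]^k`, the distance in `H` from `i` to `x` equals `x_(i)` (the `Fin 3`-value `x i`
codes the entry `(x i : ℕ) + 1`). -/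
theorem dist_comp3 (k : ℕ) (hk : 2 ≤ k) (H2 : SimpleGraph (Fin k → Fin 3))
    (h : comp3 H2 ∈ Cset k) (i : Fin k) (x : Fin k → Fin 3) :
    (comp3 H2).dist (Sum.inl i) (Sum.inr x) = (x i : ℕ) + 1 := by
  obtain ⟨H2', hcc', heq⟩ := h
  have hH : H2 = H2' := by
    ext y z
    exact iff_of_eq (congrArg (fun G => G.Adj (Sum.inr y) (Sum.inr z)) heq)
  subst hH
  have hcc : CCond H2 := hcc'
  have htri : ∀ a : Fin 3, a = 0 ∨ a = 1 ∨ a = 2 := by decide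
  -- construct a walk of length (x i) + 1
  have hup : ∃ p : (comp3 H2).Walk (Sum.inl i) (Sum.inr x), p.length = (x i : ℕ) + 1 := by
    rcases htri (x i) with hxi | hxi | hxi
    · refine ⟨SimpleGraph.Walk.cons (show (comp3 H2).Adj (Sum.inl i) (Sum.inr x) from hxi) SimpleGraph.Walk.nil, ?_⟩
      simp [hxi]
    · obtain ⟨y, hady, hC⟩ := hcc.2.1 i x hxi
      have hy : y i = 0 := by
        rcases hC.1 with ⟨h1, h2⟩ | ⟨h1, h2⟩
        · rw [hxi] at h1; exact absurd h1 (by decide)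
        · exact h2
      refine ⟨SimpleGraph.Walk.cons (show (comp3 H2).Adj (Sum.inl i) (Sum.inr y) from hy)
        (SimpleGraph.Walk.cons (show (comp3 H2).Adj (Sum.inr y) (Sum.inr x) from hady.symm) SimpleGraph.Walk.nil), ?_⟩
      simp [hxi]
    · by_cases h0 : ∀ t, x t ≠ 0
      · obtain ⟨y, hady, hD⟩ := hcc.2.2 i x hxi h0
        have hy : y i = 1 := by
          rcases hD.1 with ⟨h1, h2⟩ | ⟨h1, h2⟩
          · rw [hxi] at h1; exact absurd h1 (by decide)
          · exact h2
        obtain ⟨z, hadz, hC⟩ := hcc.2.1 i y hy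
        have hz : z i = 0 := by
          rcases hC.1 with ⟨h1, h2⟩ | ⟨h1, h2⟩
          · rw [hy] at h1; exact absurd h1 (by decide)
          · exact h2
        refine ⟨SimpleGraph.Walk.cons (show (comp3 H2).Adj (Sum.inl i) (Sum.inr z) from hz)
          (SimpleGraph.Walk.cons (show (comp3 H2).Adj (Sum.inr z) (Sum.inr y) from hadz.symm)
            (SimpleGraph.Walk.cons (show (comp3 H2).Adj (Sum.inr y) (Sum.inr x) from hady.symm)
              SimpleGraph.Walk.nil)), ?_⟩
        simp [hxi]
      · push_neg at h0
        obtain ⟨t, ht⟩ := h0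
        refine ⟨SimpleGraph.Walk.cons
            (show (comp3 H2).Adj (Sum.inl i) (Sum.inr fun _ => (0:Fin 3)) from rfl)
          (SimpleGraph.Walk.cons (show (comp3 H2).Adj (Sum.inr fun _ => (0:Fin 3)) (Sum.inl t) from rfl)
            (SimpleGraph.Walk.cons (show (comp3 H2).Adj (Sum.inl t) (Sum.inr x) from ht) SimpleGraph.Walk.nil)), ?_⟩
        simp [hxi]
  obtain ⟨p, hp⟩ := hup
  have hle : (comp3 H2).dist (Sum.inl i) (Sum.inr x) ≤ (x i : ℕ) + 1 :=
    hp ▸ SimpleGraph.dist_le p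
  have hreach : (comp3 H2).Reachable (Sum.inl i) (Sum.inr x) := p.reachable
  obtain ⟨q, hq⟩ := hreach.exists_walk_length_eq_dist
  have hge := walk_low3 hcc i x q
  omega
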